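/- If both gcd(r−1,n) and m are even, then Λ(n,m;r) has exactly three subgroups of index 2, namely ⟨α², β⟩, ⟨α, β²⟩ and ⟨α², αβ⟩. -/

import Mathlib

section Aux

variable {G : Type*} [Group G]

lemma my_conj_mem_closure (x : G) (S : Set G)
    (h : ∀ s ∈ S, x * s * x⁻¹ ∈ Subgroup.closure S) :
    ∀ k ∈ Subgroup.closure S, x * k * x⁻¹ ∈ Subgroup.closure S := by
  intro k hk
  induction hk using Subgroup.closure_induction with
  | mem s hs => exact h s hs
  | one => simpa using one_mem _
  | mul a b ha hb iha ihb =>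
      have := mul_mem iha ihb
      have e : (x * a * x⁻¹) * (x * b * x⁻¹) = x * (a * b) * x⁻¹ := by group
      rwa [e] at this
  | inv a ha iha =>
      have := inv_mem iha
      have e : (x * a * x⁻¹)⁻¹ = x * a⁻¹ * x⁻¹ := by group
      rwa [e] at this

lemma my_cover (K : Subgroup G) (x : G) (S : Set G)
    (hS : Subgroup.closure S = ⊤)
    (hx2 : x ^ 2 ∈ K)
    (hconj : ∀ k ∈ K, x * k * x⁻¹ ∈ K)
    (hgen : ∀ s ∈ S, s ∈ K ∨ x⁻¹ * s ∈ K) :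
    ∀ g : G, g ∈ K ∨ x⁻¹ * g ∈ K := by
  have hconj' : ∀ k ∈ K, x⁻¹ * k * x ∈ K := by
    intro k hk
    have e : x⁻¹ * k * x = (x ^ 2)⁻¹ * (x * k * x⁻¹) * x ^ 2 := by group
    rw [e]
    exact K.mul_mem (K.mul_mem (K.inv_mem hx2) (hconj k hk)) hx2
  intro g
  have hg : g ∈ Subgroup.closure S := by rw [hS]; trivial
  induction hg using Subgroup.closure_induction with
  | mem s hs => exact hgen s hs
  | one => exact Or.inl (one_mem K)
  | mul a b ha hb iha ihb =>
      rcases iha with h1 | h1 <;> rcases ihb with h2 | h2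
      · exact Or.inl (K.mul_mem h1 h2)
      · refine Or.inr ?_
        have e : x⁻¹ * (a * b) = (x⁻¹ * a * x) * (x⁻¹ * b) := by group
        rw [e]; exact K.mul_mem (hconj' a h1) h2
      · refine Or.inr ?_
        have e : x⁻¹ * (a * b) = (x⁻¹ * a) * b := by group
        rw [e]; exact K.mul_mem h1 h2
      · refine Or.inl ?_
        have e : a * b = (x * (x⁻¹ * a) * x⁻¹) * x ^ 2 * (x⁻¹ * b) := by group
        rw [e]; exact K.mul_mem (K.mul_mem (hconj _ h1) hx2) h2
  | inv a ha iha =>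
      rcases iha with h1 | h1
      · exact Or.inl (K.inv_mem h1)
      · refine Or.inr ?_
        have e : x⁻¹ * a⁻¹ = (x⁻¹ * (x⁻¹ * a)⁻¹ * x) * (x ^ 2)⁻¹ := by group
        rw [e]; exact K.mul_mem (hconj' _ (K.inv_mem h1)) (K.inv_mem hx2)

lemma my_eq_ker (K : Subgroup G) (x : G)
    (hcov : ∀ g : G, g ∈ K ∨ x⁻¹ * g ∈ K)
    (φ : G →* Multiplicative (ZMod 2)) (hKφ : K ≤ φ.ker) (hxφ : φ x ≠ 1) :
    K.index = 2 := by
  have hKer : K = φ.ker := by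
    refine le_antisymm hKφ fun g hg => ?_
    rcases hcov g with h | h
    · exact h
    · exfalso
      apply hxφ
      have h1 : φ (x⁻¹ * g) = 1 := hKφ h
      have h2 : φ g = 1 := hg
      rw [map_mul, map_inv, h2, mul_one, inv_eq_one] at h1
      exact h1
  have hsurj : Function.Surjective φ := by
    intro c
    have : ∀ a b : Multiplicative (ZMod 2), a ≠ 1 → b = 1 ∨ b = a := by decide
    rcases this (φ x) c hxφ with rfl | rfl
    · exact ⟨1, map_one φ⟩
    · exact ⟨x, rfl⟩
  rw [hKer, Subgroup.index_ker, MonoidHom.range_eq_top.mpr hsurj,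
    Nat.card_congr Subgroup.topEquiv.toEquiv]
  simp [Nat.card_eq_fintype_card]

lemma my_eq_of_le_index_two {K H : Subgroup G} (h : K ≤ H) (hK : K.index = 2)
    (hH : H.index = 2) : K = H := by
  have h1 := Subgroup.relIndex_mul_index h
  rw [hK, hH] at h1
  have h2 : K.relIndex H = 1 := by omega
  exact le_antisymm h (Subgroup.relIndex_eq_one.mp h2)

end Aux

/-- Relations of the metacyclic group Λ(n,m;r) = ⟨α,β | αⁿ = βᵐ = 1, βαβ⁻¹ = αʳ⟩. -/
def metacyclicRels (n m r : ℕ) : Set (FreeGroup (Fin 2)) :=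
  { FreeGroup.of 0 ^ n, FreeGroup.of 1 ^ m,
    FreeGroup.of 1 * FreeGroup.of 0 * (FreeGroup.of 1)⁻¹ * (FreeGroup.of 0 ^ r)⁻¹ }

/-- The split metacyclic group Λ(n,m;r). -/
abbrev Lam (n m r : ℕ) := PresentedGroup (metacyclicRels n m r)

def lamAlpha (n m r : ℕ) : Lam n m r := PresentedGroup.of 0
def lamBeta (n m r : ℕ) : Lam n m r := PresentedGroup.of 1

lemma my_lift_rels {n m r : ℕ} (u v t : ℕ) (hn : n = 2 * u) (hm : m = 2 * v)
    (hrt : r = 2 * t + 1) (f : Fin 2 → Multiplicative (ZMod 2)) :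
    ∀ w ∈ metacyclicRels n m r, FreeGroup.lift f w = 1 := by
  have sq : ∀ a : Multiplicative (ZMod 2), a ^ 2 = 1 := by decide
  have heven : ∀ (a : Multiplicative (ZMod 2)) (k : ℕ), a ^ (2 * k) = 1 := by
    intro a k; rw [mul_comm 2 k, pow_mul, sq]
  have hcomm : ∀ a b : Multiplicative (ZMod 2), b * a * b⁻¹ * a⁻¹ = 1 := by decide
  intro w hw
  rcases hw with rfl | rfl | rfl
  · rw [map_pow, FreeGroup.lift_apply_of, hn, heven]
  · rw [map_pow, FreeGroup.lift_apply_of, hm, heven]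
  · rw [map_mul, map_mul, map_mul, map_inv, map_inv, map_pow, FreeGroup.lift_apply_of,
      FreeGroup.lift_apply_of, hrt, pow_succ, heven, one_mul]
    exact hcomm _ _

lemma my_phi {n m r : ℕ} (u v t : ℕ) (hn : n = 2 * u) (hm : m = 2 * v)
    (hrt : r = 2 * t + 1) (f : Fin 2 → Multiplicative (ZMod 2)) :
    ∃ φ : Lam n m r →* Multiplicative (ZMod 2),
      ∀ i, φ (PresentedGroup.of i) = f i :=
  ⟨PresentedGroup.toGroup (my_lift_rels u v t hn hm hrt f),
    fun _ => PresentedGroup.toGroup.of _⟩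

lemma my_rel_one {n m r : ℕ} {w : FreeGroup (Fin 2)} (hw : w ∈ metacyclicRels n m r) :
    PresentedGroup.mk (metacyclicRels n m r) w = 1 :=
  (QuotientGroup.eq_one_iff _).mpr (Subgroup.subset_normalClosure hw)

lemma my_hC (n m r : ℕ) :
    lamBeta n m r * lamAlpha n m r * (lamBeta n m r)⁻¹ = lamAlpha n m r ^ r := by
  have h := my_rel_one (n := n) (m := m) (r := r) (Or.inr (Or.inr rfl))
  rw [map_mul, map_mul, map_mul, map_inv, map_inv, map_pow] at h
  exact mul_inv_eq_one.mp h

lemma my_top (n m r : ℕ) :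
    Subgroup.closure {lamAlpha n m r, lamBeta n m r} = ⊤ := by
  have h := PresentedGroup.closure_range_of (metacyclicRels n m r)
  have e : Set.range (PresentedGroup.of : Fin 2 → Lam n m r)
      = {lamAlpha n m r, lamBeta n m r} := by
    ext x
    constructor
    · rintro ⟨i, rfl⟩
      fin_cases i
      · exact Or.inl rfl
      · exact Or.inr rfl
    · rintro (rfl | rfl)
      · exact ⟨0, rfl⟩
      · exact ⟨1, rfl⟩
  rwa [e] at h

theorem stmt6 (n m r : ℕ) (hn : 0 < n) (hm : 0 < m) (hr : 0 < r)
    (hrm : r ^ m ≡ 1 [MOD n]) (hg : 2 ∣ Nat.gcd (r - 1) n) (hm2 : 2 ∣ m) :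
    {H : Subgroup (Lam n m r) | H.index = 2}
      = { Subgroup.closure {(lamAlpha n m r) ^ 2, lamBeta n m r},
          Subgroup.closure {lamAlpha n m r, (lamBeta n m r) ^ 2},
          Subgroup.closure {(lamAlpha n m r) ^ 2, lamAlpha n m r * lamBeta n m r} } := by
  classical
  obtain ⟨u, hu⟩ : 2 ∣ n := hg.trans (Nat.gcd_dvd_right _ _)
  obtain ⟨v, hv⟩ := hm2
  obtain ⟨t, hrt⟩ : ∃ t, r = 2 * t + 1 := by
    have h1 : 2 ∣ r - 1 := hg.trans (Nat.gcd_dvd_left _ _)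
    obtain ⟨t, ht⟩ := h1
    exact ⟨t, by omega⟩
  set a := lamAlpha n m r with ha_def
  set b := lamBeta n m r with hb_def
  have hC : b * a * b⁻¹ = a ^ (2 * t + 1) := by rw [← hrt]; exact my_hC n m r
  have hba : b * a⁻¹ = (a ^ (2 * t + 1))⁻¹ * b := by rw [← hC]; group
  have hTop : Subgroup.closure {a, b} = ⊤ := my_top n m r
  have gne : (Multiplicative.ofAdd (1 : ZMod 2)) ≠ 1 := by decide
  set g : Multiplicative (ZMod 2) := Multiplicative.ofAdd (1 : ZMod 2) with hg_def
  -- the three subgroups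
  set K₁ := Subgroup.closure {a ^ 2, b} with hK₁
  set K₂ := Subgroup.closure {a, b ^ 2} with hK₂
  set K₃ := Subgroup.closure {a ^ 2, a * b} with hK₃
  have ha2K₁ : a ^ 2 ∈ K₁ := Subgroup.subset_closure (Or.inl rfl)
  have hbK₁ : b ∈ K₁ := Subgroup.subset_closure (Or.inr rfl)
  have haK₂ : a ∈ K₂ := Subgroup.subset_closure (Or.inl rfl)
  have hb2K₂ : b ^ 2 ∈ K₂ := Subgroup.subset_closure (Or.inr rfl)
  have ha2K₃ : a ^ 2 ∈ K₃ := Subgroup.subset_closure (Or.inl rfl)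
  have habK₃ : a * b ∈ K₃ := Subgroup.subset_closure (Or.inr rfl)
  -- conjugation facts
  have epow : a * (a ^ (2 * t + 1))⁻¹ = ((a ^ 2) ^ t)⁻¹ := by group
  have e1 : a * b * a⁻¹ = ((a ^ 2) ^ t)⁻¹ * b := by
    rw [mul_assoc, hba, ← mul_assoc, epow]
  have hconj₁ : ∀ k ∈ K₁, a * k * a⁻¹ ∈ K₁ := by
    refine my_conj_mem_closure a _ ?_
    rintro s (rfl | rfl)
    · have e : a * a ^ 2 * a⁻¹ = a ^ 2 := by group
      rw [e]; exact ha2K₁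
    · rw [e1]; exact K₁.mul_mem (K₁.inv_mem (K₁.pow_mem ha2K₁ t)) hbK₁
  have hconj₂ : ∀ k ∈ K₂, b * k * b⁻¹ ∈ K₂ := by
    refine my_conj_mem_closure b _ ?_
    rintro s (rfl | rfl)
    · rw [hC]; exact K₂.pow_mem haK₂ _
    · have e : b * b ^ 2 * b⁻¹ = b ^ 2 := by group
      rw [e]; exact hb2K₂
  have hconj₃ : ∀ k ∈ K₃, a * k * a⁻¹ ∈ K₃ := by
    refine my_conj_mem_closure a _ ?_
    rintro s (rfl | rfl)
    · have e : a * a ^ 2 * a⁻¹ = a ^ 2 := by group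
      rw [e]; exact ha2K₃
    · have e0 : a * (a * b) * a⁻¹ = a * (a * (b * a⁻¹)) := by group
      rw [e0, hba]
      have e2 : a * (a * ((a ^ (2 * t + 1))⁻¹ * b)) = ((a ^ 2) ^ t)⁻¹ * (a * b) := by
        group
      rw [e2]
      exact K₃.mul_mem (K₃.inv_mem (K₃.pow_mem ha2K₃ t)) habK₃
  -- covering facts
  have hcov₁ : ∀ x : Lam n m r, x ∈ K₁ ∨ a⁻¹ * x ∈ K₁ := by
    refine my_cover K₁ a {a, b} hTop ha2K₁ hconj₁ ?_
    rintro s (rfl | rfl)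
    · refine Or.inr ?_
      have e : a⁻¹ * a = 1 := by group
      rw [e]; exact K₁.one_mem
    · exact Or.inl hbK₁
  have hcov₂ : ∀ x : Lam n m r, x ∈ K₂ ∨ b⁻¹ * x ∈ K₂ := by
    refine my_cover K₂ b {a, b} hTop hb2K₂ hconj₂ ?_
    rintro s (rfl | rfl)
    · exact Or.inl haK₂
    · refine Or.inr ?_
      have e : b⁻¹ * b = 1 := by group
      rw [e]; exact K₂.one_mem
  have hcov₃ : ∀ x : Lam n m r, x ∈ K₃ ∨ a⁻¹ * x ∈ K₃ := by
    refine my_cover K₃ a {a, b} hTop ha2K₃ hconj₃ ?_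
    rintro s (rfl | rfl)
    · refine Or.inr ?_
      have e : a⁻¹ * a = 1 := by group
      rw [e]; exact K₃.one_mem
    · refine Or.inr ?_
      have e : a⁻¹ * b = (a ^ 2)⁻¹ * (a * b) := by group
      rw [e]; exact K₃.mul_mem (K₃.inv_mem ha2K₃) habK₃
  -- homomorphisms
  obtain ⟨φ₁, hφ₁⟩ := my_phi (n := n) (m := m) (r := r) u v t hu hv hrt ![g, 1]
  obtain ⟨φ₂, hφ₂⟩ := my_phi (n := n) (m := m) (r := r) u v t hu hv hrt ![1, g]
  obtain ⟨φ₃, hφ₃⟩ := my_phi (n := n) (m := m) (r := r) u v t hu hv hrt ![g, g]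
  have hφ₁a : φ₁ a = g := by have := hφ₁ 0; simpa [ha_def, lamAlpha] using this
  have hφ₁b : φ₁ b = 1 := by have := hφ₁ 1; simpa [hb_def, lamBeta] using this
  have hφ₂a : φ₂ a = 1 := by have := hφ₂ 0; simpa [ha_def, lamAlpha] using this
  have hφ₂b : φ₂ b = g := by have := hφ₂ 1; simpa [hb_def, lamBeta] using this
  have hφ₃a : φ₃ a = g := by have := hφ₃ 0; simpa [ha_def, lamAlpha] using this
  have hφ₃b : φ₃ b = g := by have := hφ₃ 1; simpa [hb_def, lamBeta] using this
  have gsq : g * g = 1 := by rw [hg_def]; decide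
  -- indices
  have hidx₁ : K₁.index = 2 := by
    refine my_eq_ker K₁ a hcov₁ φ₁ ?_ (by rw [hφ₁a]; exact gne)
    rw [hK₁, Subgroup.closure_le]
    rintro s (rfl | rfl)
    · show φ₁ (a ^ 2) = 1
      rw [map_pow, hφ₁a, pow_two, gsq]
    · exact hφ₁b
  have hidx₂ : K₂.index = 2 := by
    refine my_eq_ker K₂ b hcov₂ φ₂ ?_ (by rw [hφ₂b]; exact gne)
    rw [hK₂, Subgroup.closure_le]
    rintro s (rfl | rfl)
    · exact hφ₂a
    · show φ₂ (b ^ 2) = 1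
      rw [map_pow, hφ₂b, pow_two, gsq]
  have hidx₃ : K₃.index = 2 := by
    refine my_eq_ker K₃ a hcov₃ φ₃ ?_ (by rw [hφ₃a]; exact gne)
    rw [hK₃, Subgroup.closure_le]
    rintro s (rfl | rfl)
    · show φ₃ (a ^ 2) = 1
      rw [map_pow, hφ₃a, pow_two, gsq]
    · show φ₃ (a * b) = 1
      rw [map_mul, hφ₃a, hφ₃b, gsq]
  -- final set equality
  ext H
  simp only [Set.mem_setOf_eq, Set.mem_insert_iff, Set.mem_singleton_iff]
  constructor
  · intro hH
    by_cases hα : a ∈ H <;> by_cases hβ : b ∈ H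
    · exfalso
      have htop : H = ⊤ := by
        have hle : Subgroup.closure {a, b} ≤ H := by
          rw [Subgroup.closure_le]
          rintro s (rfl | rfl)
          exacts [hα, hβ]
        rw [hTop] at hle
        exact top_le_iff.mp hle
      rw [htop, Subgroup.index_top] at hH
      omega
    · -- a ∈ H, b ∉ H : H = K₂
      refine Or.inr (Or.inl ?_)
      refine (my_eq_of_le_index_two ?_ hidx₂ hH).symm
      rw [hK₂, Subgroup.closure_le]
      rintro s (rfl | rfl)
      · exact hα
      · exact Subgroup.sq_mem_of_index_two hH b
    · -- a ∉ H, b ∈ H : H = K₁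
      refine Or.inl ?_
      refine (my_eq_of_le_index_two ?_ hidx₁ hH).symm
      rw [hK₁, Subgroup.closure_le]
      rintro s (rfl | rfl)
      · exact Subgroup.sq_mem_of_index_two hH a
      · exact hβ
    · -- a ∉ H, b ∉ H : H = K₃
      refine Or.inr (Or.inr ?_)
      refine (my_eq_of_le_index_two ?_ hidx₃ hH).symm
      rw [hK₃, Subgroup.closure_le]
      rintro s (rfl | rfl)
      · exact Subgroup.sq_mem_of_index_two hH a
      · exact (Subgroup.mul_mem_iff_of_index_two hH).mpr (iff_of_false hα hβ)
  · rintro (rfl | rfl | rfl)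
    exacts [hidx₁, hidx₂, hidx₃]
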